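/- Let δ₁, δ_{2,3} ∈ (0,1], 0 < θ < min{δ₁, δ_{2,3}}, and set δ₀ := min{θ, δ₁ - θ, δ_{2,3} - θ}. Then for every real A ≥ 1, the sum over integers k₂ ≥ k₁ ≥ 0 and integers j₁, j₂, j₃ ≥ 1 with j₂ ≥ A of 2^{-k₁δ₁} · j₁^{-1-δ₁} · j₂^{-1} · j₃^{-1} · (2^{-k₂} j₂^{-1} + 2^{k₁-k₂} j₃^{-1})^{δ_{2,3}} / (2^{k₁} j₁ j₂ j₃^{-1} + 2^{-k₁} j₁^{-1} j₂^{-1} j₃)^{θ} is bounded by a constant (depending only on δ₁, δ_{2,3}, θ) times A^{-δ₀}. -/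

import Mathlib

open scoped ENNReal

section helpers
lemma five_sum (G : ℕ → ℕ → ℝ≥0∞) (f g h m : ℕ → ℝ≥0∞) (c : ℝ≥0∞)
    (hG : ∀ k₁, (∑' k₂, G k₁ k₂) = c) :
    (∑' k₁ : ℕ, ∑' k₂ : ℕ, ∑' j₁ : ℕ, ∑' j₂ : ℕ, ∑' j₃ : ℕ,
        G k₁ k₂ * (f k₁ * g j₁ * h j₂ * m j₃))
      = (∑' k, f k) * c * (∑' j, g j) * (∑' j, h j) * (∑' j, m j) := by
  have e3 : ∀ (k₁ k₂ j₁ j₂ : ℕ), (∑' j₃, G k₁ k₂ * (f k₁ * g j₁ * h j₂ * m j₃))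
      = G k₁ k₂ * f k₁ * g j₁ * h j₂ * (∑' j₃, m j₃) := by
    intro k₁ k₂ j₁ j₂
    rw [← ENNReal.tsum_mul_left]
    exact tsum_congr fun j₃ => by ring
  have e2 : ∀ (k₁ k₂ j₁ : ℕ), (∑' j₂, G k₁ k₂ * f k₁ * g j₁ * h j₂ * (∑' j₃, m j₃))
      = G k₁ k₂ * f k₁ * g j₁ * (∑' j₂, h j₂) * (∑' j₃, m j₃) := by
    intro k₁ k₂ j₁
    calc ∑' j₂, G k₁ k₂ * f k₁ * g j₁ * h j₂ * (∑' j₃, m j₃)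
        = ∑' j₂, (G k₁ k₂ * f k₁ * g j₁ * (∑' j₃, m j₃)) * h j₂ :=
          tsum_congr fun j₂ => by ring
      _ = (G k₁ k₂ * f k₁ * g j₁ * (∑' j₃, m j₃)) * (∑' j₂, h j₂) := ENNReal.tsum_mul_left
      _ = G k₁ k₂ * f k₁ * g j₁ * (∑' j₂, h j₂) * (∑' j₃, m j₃) := by ring
  have e1 : ∀ (k₁ k₂ : ℕ), (∑' j₁, G k₁ k₂ * f k₁ * g j₁ * (∑' j₂, h j₂) * (∑' j₃, m j₃))
      = G k₁ k₂ * f k₁ * (∑' j₁, g j₁) * (∑' j₂, h j₂) * (∑' j₃, m j₃) := by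
    intro k₁ k₂
    calc ∑' j₁, G k₁ k₂ * f k₁ * g j₁ * (∑' j₂, h j₂) * (∑' j₃, m j₃)
        = ∑' j₁, (G k₁ k₂ * f k₁ * (∑' j₂, h j₂) * (∑' j₃, m j₃)) * g j₁ :=
          tsum_congr fun j₁ => by ring
      _ = (G k₁ k₂ * f k₁ * (∑' j₂, h j₂) * (∑' j₃, m j₃)) * (∑' j₁, g j₁) :=
          ENNReal.tsum_mul_left
      _ = G k₁ k₂ * f k₁ * (∑' j₁, g j₁) * (∑' j₂, h j₂) * (∑' j₃, m j₃) := by ring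
  have e0 : ∀ k₁ : ℕ, (∑' k₂, G k₁ k₂ * f k₁ * (∑' j₁, g j₁) * (∑' j₂, h j₂) * (∑' j₃, m j₃))
      = f k₁ * c * (∑' j₁, g j₁) * (∑' j₂, h j₂) * (∑' j₃, m j₃) := by
    intro k₁
    calc ∑' k₂, G k₁ k₂ * f k₁ * (∑' j₁, g j₁) * (∑' j₂, h j₂) * (∑' j₃, m j₃)
        = ∑' k₂, (f k₁ * (∑' j₁, g j₁) * (∑' j₂, h j₂) * (∑' j₃, m j₃)) * G k₁ k₂ :=
          tsum_congr fun k₂ => by ring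
      _ = (f k₁ * (∑' j₁, g j₁) * (∑' j₂, h j₂) * (∑' j₃, m j₃)) * (∑' k₂, G k₁ k₂) :=
          ENNReal.tsum_mul_left
      _ = f k₁ * c * (∑' j₁, g j₁) * (∑' j₂, h j₂) * (∑' j₃, m j₃) := by rw [hG k₁]; ring
  simp only [e3, e2, e1, e0]
  calc ∑' k₁, f k₁ * c * (∑' j₁, g j₁) * (∑' j₂, h j₂) * (∑' j₃, m j₃)
      = ∑' k₁, (c * (∑' j₁, g j₁) * (∑' j₂, h j₂) * (∑' j₃, m j₃)) * f k₁ :=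
        tsum_congr fun k₁ => by ring
    _ = (c * (∑' j₁, g j₁) * (∑' j₂, h j₂) * (∑' j₃, m j₃)) * (∑' k, f k) :=
        ENNReal.tsum_mul_left
    _ = _ := by ring

lemma five_sum2 (G : ℕ → ℕ → ℝ≥0∞) (f g h m f' g' h' m' : ℕ → ℝ≥0∞) (c : ℝ≥0∞)
    (hG : ∀ k₁, (∑' k₂, G k₁ k₂) = c) :
    (∑' k₁ : ℕ, ∑' k₂ : ℕ, ∑' j₁ : ℕ, ∑' j₂ : ℕ, ∑' j₃ : ℕ,
        G k₁ k₂ * (f k₁ * g j₁ * h j₂ * m j₃ + f' k₁ * g' j₁ * h' j₂ * m' j₃))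
      = (∑' k, f k) * c * (∑' j, g j) * (∑' j, h j) * (∑' j, m j)
        + (∑' k, f' k) * c * (∑' j, g' j) * (∑' j, h' j) * (∑' j, m' j) := by
  simp only [mul_add, ENNReal.tsum_add]
  rw [five_sum G f g h m c hG, five_sum G f' g' h' m' c hG]
end helpers

lemma step_ineq {σ x : ℝ} (hσ : 0 < σ) (hx : 1 ≤ x) :
    (x+1) ^ (-σ) + σ * (x+1) ^ (-(1+σ)) ≤ x ^ (-σ) := by
  have hx0 : 0 < x := lt_of_lt_of_le one_pos hx
  have hx1 : 0 < x + 1 := by linarith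
  have hb : 1 + (1+σ) * (1/x) ≤ (1 + 1/x) ^ ((1:ℝ)+σ) :=
    one_add_mul_self_le_rpow_one_add
      (by have : (0:ℝ) ≤ 1/x := by positivity
          linarith) (by linarith)
  have hxp : (x+1) ^ ((1:ℝ)+σ) = x ^ ((1:ℝ)+σ) * (1+1/x) ^ ((1:ℝ)+σ) := by
    rw [← Real.mul_rpow hx0.le (by positivity)]
    congr 1
    field_simp
  have key : x ^ σ * (x+1+σ) ≤ (x+1) ^ ((1:ℝ)+σ) := by
    have e : x ^ ((1:ℝ)+σ) * (1 + (1+σ)*(1/x)) = x ^ σ * (x+1+σ) := by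
      rw [Real.rpow_add hx0, Real.rpow_one]
      field_simp
      ring
    calc x ^ σ * (x+1+σ) = x ^ ((1:ℝ)+σ) * (1 + (1+σ)*(1/x)) := e.symm
      _ ≤ x ^ ((1:ℝ)+σ) * (1+1/x) ^ ((1:ℝ)+σ) :=
          mul_le_mul_of_nonneg_left hb (by positivity)
      _ = (x+1) ^ ((1:ℝ)+σ) := hxp.symm
  have h2 : (x+1) ^ (-σ) + σ * (x+1) ^ (-(1+σ)) = (x+1+σ) / ((x+1) ^ ((1:ℝ)+σ)) := by
    rw [Real.rpow_neg hx1.le, Real.rpow_neg hx1.le, Real.rpow_add hx1, Real.rpow_one]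
    have hp : (0:ℝ) < (x+1) ^ σ := Real.rpow_pos_of_pos hx1 σ
    field_simp
  rw [h2]
  have h3 : (x+1+σ) / ((x+1) ^ ((1:ℝ)+σ)) ≤ (x+1+σ) / (x ^ σ * (x+1+σ)) :=
    div_le_div_of_nonneg_left (by linarith) (by positivity) key
  refine h3.trans (le_of_eq ?_)
  have hps : (0:ℝ) < x ^ σ := Real.rpow_pos_of_pos hx0 σ
  rw [Real.rpow_neg hx0.le]
  field_simp

lemma tail_real {σ : ℝ} (hσ : 0 < σ) (N : ℕ) (hN : 1 ≤ N) :
    ∑' i : ℕ, ((N + i : ℕ) : ℝ) ^ (-(1+σ)) ≤ (σ⁻¹ * 2 ^ ((1:ℝ)+σ)) * (N:ℝ) ^ (-σ) := by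
  set K : ℝ := σ⁻¹ * 2 ^ ((1:ℝ)+σ) with hK
  have hKpos : 0 < K := by positivity
  set g : ℕ → ℝ := fun i => ((N + i : ℕ) : ℝ) ^ (-σ) with hg
  have hterm : ∀ i : ℕ, ((N + i : ℕ) : ℝ) ^ (-(1+σ)) ≤ K * (g i - g (i+1)) := by
    intro i
    set x : ℝ := ((N + i : ℕ) : ℝ) with hx
    have hx1 : 1 ≤ x := by
      rw [hx]
      exact_mod_cast le_trans hN (Nat.le_add_right N i)
    have hx0 : (0:ℝ) < x := lt_of_lt_of_le one_pos hx1
    have hstep : σ * (x+1) ^ (-(1+σ)) ≤ g i - g (i+1) := by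
      have := step_ineq hσ hx1
      have e1 : g i = x ^ (-σ) := rfl
      have e2 : g (i+1) = (x+1) ^ (-σ) := by
        rw [hg, hx]; push_cast; ring_nf
      rw [e1, e2]; linarith
    have h2x : x + 1 ≤ 2 * x := by linarith
    have hcmp : (2*x) ^ (-(1+σ)) ≤ (x+1) ^ (-(1+σ)) :=
      Real.rpow_le_rpow_of_nonpos (by linarith) h2x (by linarith)
    have hsplit : (2*x) ^ (-(1+σ)) = 2 ^ (-(1+σ)) * x ^ (-(1+σ)) :=
      Real.mul_rpow (by norm_num) hx0.le
    have h2pow : (2:ℝ) ^ ((1:ℝ)+σ) * 2 ^ (-(1+σ)) = 1 := by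
      rw [← Real.rpow_add (by norm_num : (0:ℝ) < 2), show (1:ℝ)+σ+(-(1+σ)) = 0 by ring,
        Real.rpow_zero]
    calc x ^ (-(1+σ)) = (2 ^ ((1:ℝ)+σ) * 2 ^ (-(1+σ))) * x ^ (-(1+σ)) := by rw [h2pow]; ring
      _ = 2 ^ ((1:ℝ)+σ) * (2*x) ^ (-(1+σ)) := by rw [hsplit]; ring
      _ ≤ 2 ^ ((1:ℝ)+σ) * (x+1) ^ (-(1+σ)) := by
          apply mul_le_mul_of_nonneg_left hcmp (by positivity)
      _ ≤ 2 ^ ((1:ℝ)+σ) * (σ⁻¹ * (g i - g (i+1))) := by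
          apply mul_le_mul_of_nonneg_left _ (by positivity)
          rw [le_inv_mul_iff₀ hσ]
          exact hstep
      _ = K * (g i - g (i+1)) := by rw [hK]; ring
  apply Real.tsum_le_of_sum_range_le (fun n => by positivity)
  intro n
  calc ∑ i ∈ Finset.range n, ((N + i : ℕ) : ℝ) ^ (-(1+σ))
      ≤ ∑ i ∈ Finset.range n, K * (g i - g (i+1)) := Finset.sum_le_sum fun i _ => hterm i
    _ = K * (g 0 - g n) := by rw [← Finset.mul_sum, Finset.sum_range_sub' g]
    _ ≤ K * (N:ℝ) ^ (-σ) := by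
        have hgn : 0 ≤ g n := by positivity
        have hg0 : g 0 = (N:ℝ) ^ (-σ) := by rw [hg]; norm_num
        nlinarith [hKpos]

lemma tail_ennreal {σ : ℝ} (hσ : 0 < σ) :
    ∃ C : ℝ≥0∞, C ≠ ⊤ ∧ ∀ A : ℝ, 1 ≤ A →
      ∑' j : ℕ, (if 1 ≤ j ∧ A ≤ (j:ℝ) then ((j:ℝ≥0∞)) ^ (-(1+σ)) else 0)
        ≤ C * (ENNReal.ofReal A) ^ (-σ) := by
  refine ⟨ENNReal.ofReal (σ⁻¹ * 2 ^ ((1:ℝ)+σ)), ENNReal.ofReal_ne_top, fun A hA => ?_⟩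
  have hA0 : (0:ℝ) < A := by linarith
  set N := ⌈A⌉₊ with hNdef
  have hN1 : 1 ≤ N := Nat.one_le_iff_ne_zero.2 (by
    simp only [hNdef, ne_eq, Nat.ceil_eq_zero, not_le]
    linarith)
  set r : ℕ → ℝ := fun j => if 1 ≤ j ∧ A ≤ (j:ℝ) then (j:ℝ) ^ (-(1+σ)) else 0 with hr
  have hr0 : ∀ j, 0 ≤ r j := by
    intro j; rw [hr]; dsimp only; split <;> positivity
  have hrle : ∀ j, r j ≤ (j:ℝ) ^ (-(1+σ)) := by
    intro j; rw [hr]; dsimp only; split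
    · exact le_rfl
    · positivity
  have hsumfull : Summable (fun j : ℕ => (j:ℝ) ^ (-(1+σ))) :=
    Real.summable_nat_rpow.2 (by linarith)
  have hsum : Summable r := Summable.of_nonneg_of_le hr0 hrle hsumfull
  have hpt : ∀ j : ℕ, (if 1 ≤ j ∧ A ≤ (j:ℝ) then ((j:ℝ≥0∞)) ^ (-(1+σ)) else 0)
      = ENNReal.ofReal (r j) := by
    intro j; rw [hr]; dsimp only; split
    · rename_i h
      have hj : (0:ℝ) < j := by exact_mod_cast lt_of_lt_of_le Nat.zero_lt_one h.1
      rw [← ENNReal.ofReal_rpow_of_pos hj, ENNReal.ofReal_natCast]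
    · simp
  rw [tsum_congr hpt, ← ENNReal.ofReal_tsum_of_nonneg hr0 hsum]
  have htail : ∑' j, r j ≤ (σ⁻¹ * 2 ^ ((1:ℝ)+σ)) * A ^ (-σ) := by
    rw [← Summable.sum_add_tsum_nat_add N hsum]
    have hz : ∑ i ∈ Finset.range N, r i = 0 := by
      apply Finset.sum_eq_zero
      intro i hi
      rw [hr]; dsimp only
      rw [if_neg]
      rintro ⟨-, hAi⟩
      have : (i:ℝ) < A := Nat.lt_ceil.1 (Finset.mem_range.1 hi)
      linarith
    rw [hz, zero_add]
    have hsumsh : Summable (fun i : ℕ => ((N + i : ℕ) : ℝ) ^ (-(1+σ))) := by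
      have h := hsumfull.comp_injective (add_right_injective N)
      apply h.congr
      intro i
      simp [Function.comp]
    have h1 : ∑' i : ℕ, r (i + N) ≤ ∑' i : ℕ, ((N + i : ℕ) : ℝ) ^ (-(1+σ)) := by
      apply Summable.tsum_le_tsum _ (hsum.comp_injective (add_left_injective N)) hsumsh
      intro i
      have := hrle (i + N)
      calc r (i + N) ≤ ((i + N : ℕ):ℝ) ^ (-(1+σ)) := this
        _ = ((N + i : ℕ):ℝ) ^ (-(1+σ)) := by rw [add_comm]
    refine h1.trans ((tail_real hσ N hN1).trans ?_)
    apply mul_le_mul_of_nonneg_left _ (by positivity)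
    apply Real.rpow_le_rpow_of_nonpos hA0 (Nat.le_ceil A) (by linarith)
  calc ENNReal.ofReal (∑' j, r j)
      ≤ ENNReal.ofReal ((σ⁻¹ * 2 ^ ((1:ℝ)+σ)) * A ^ (-σ)) := ENNReal.ofReal_le_ofReal htail
    _ = ENNReal.ofReal (σ⁻¹ * 2 ^ ((1:ℝ)+σ)) * (ENNReal.ofReal A) ^ (-σ) := by
        rw [ENNReal.ofReal_mul (by positivity), ENNReal.ofReal_rpow_of_pos hA0]

lemma geo_ne_top {c : ℝ} (hc : 0 < c) :
    ∑' n : ℕ, (2:ℝ≥0∞) ^ (-(n:ℝ) * c) ≠ ⊤ := by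
  have he : ∀ n:ℕ, (2:ℝ≥0∞) ^ (-(n:ℝ)*c) = ((2:ℝ≥0∞)^(-c))^n := by
    intro n
    rw [← ENNReal.rpow_natCast ((2:ℝ≥0∞)^(-c)) n, ← ENNReal.rpow_mul]
    congr 1; ring
  rw [tsum_congr he, ENNReal.tsum_geometric]
  have hr : (2:ℝ≥0∞)^(-c) < 1 := by
    have h0 : (2:ℝ≥0∞)^(0:ℝ) = 1 := ENNReal.rpow_zero
    calc (2:ℝ≥0∞)^(-c) < (2:ℝ≥0∞)^(0:ℝ) :=
          ENNReal.rpow_lt_rpow_of_exponent_lt (by norm_num) (by norm_num) (by linarith)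
      _ = 1 := h0
  rw [ne_eq, ENNReal.inv_eq_top]
  exact (tsub_pos_of_lt hr).ne'

lemma geo_shift {c : ℝ} (k₁ : ℕ) :
    ∑' k₂ : ℕ, (if k₁ ≤ k₂ then (2:ℝ≥0∞) ^ (((k₁:ℝ) - (k₂:ℝ)) * c) else 0)
      = ∑' m : ℕ, (2:ℝ≥0∞) ^ (-(m:ℝ) * c) := by
  apply tsum_eq_tsum_of_ne_zero_bij (fun m => k₁ + (m : ℕ))
  · intro a b hab
    exact Subtype.ext (by simpa using hab)
  · intro k₂ hk₂
    simp only [Function.mem_support, ne_eq] at hk₂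
    have hk : k₁ ≤ k₂ := by
      by_contra h
      exact hk₂ (if_neg h)
    refine ⟨⟨k₂ - k₁, ?_⟩, ?_⟩
    · simp [Function.mem_support, ENNReal.rpow_eq_zero_iff]
    · simp [Nat.add_sub_cancel' hk]
  · intro m
    rw [if_pos (Nat.le_add_right k₁ m)]
    congr 1
    push_cast
    ring

lemma rpow_rpow (x : ℝ≥0∞) (p q : ℝ) : (x^p)^q = x^(p*q) := (ENNReal.rpow_mul x p q).symm

lemma key_term (δ₁ δ₂₃ θ : ℝ) (hδ₁ : 0 < δ₁) (hδ₂₃0 : 0 < δ₂₃) (hδ₂₃1 : δ₂₃ ≤ 1)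
    (hθ : 0 < θ)
    (k₁ k₂ j₁ j₂ j₃ : ℕ) (h1 : 1 ≤ j₁) (h2 : 1 ≤ j₂) (h3 : 1 ≤ j₃) :
    (2 : ℝ≥0∞) ^ (-(k₁ : ℝ) * δ₁) * ((j₁ : ℝ≥0∞)) ^ (-(1 + δ₁)) *
        ((j₂ : ℝ≥0∞))⁻¹ * ((j₃ : ℝ≥0∞))⁻¹ *
        ((2 : ℝ≥0∞) ^ (-(k₂ : ℝ)) * ((j₂ : ℝ≥0∞))⁻¹ +
            (2 : ℝ≥0∞) ^ ((k₁ : ℝ) - (k₂ : ℝ)) * ((j₃ : ℝ≥0∞))⁻¹) ^ δ₂₃ /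
        ((2 : ℝ≥0∞) ^ ((k₁ : ℝ)) * (j₁ : ℝ≥0∞) * (j₂ : ℝ≥0∞) * ((j₃ : ℝ≥0∞))⁻¹ +
            (2 : ℝ≥0∞) ^ (-(k₁ : ℝ)) * ((j₁ : ℝ≥0∞))⁻¹ * ((j₂ : ℝ≥0∞))⁻¹ *
              (j₃ : ℝ≥0∞)) ^ θ
      ≤ (2:ℝ≥0∞) ^ (((k₁:ℝ) - (k₂:ℝ)) * δ₂₃) *
          ((2:ℝ≥0∞) ^ (-(k₁:ℝ) * (δ₁ - θ)) * (j₁:ℝ≥0∞) ^ (-(1 + (δ₁ - θ))) *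
              (j₂:ℝ≥0∞) ^ (-(1 + (δ₂₃ - θ))) * (j₃:ℝ≥0∞) ^ (-(1 + θ))
            + (2:ℝ≥0∞) ^ (-(k₁:ℝ) * (δ₁ + θ)) * (j₁:ℝ≥0∞) ^ (-(1 + (δ₁ + θ))) *
              (j₂:ℝ≥0∞) ^ (-(1 + θ)) * (j₃:ℝ≥0∞) ^ (-(1 + (δ₂₃ - θ)))) := by
  have ha0 : (2:ℝ≥0∞) ≠ 0 := by norm_num
  have hat : (2:ℝ≥0∞) ≠ ⊤ := by norm_num
  set u₁ : ℝ≥0∞ := (j₁ : ℝ≥0∞) with hu₁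
  set u₂ : ℝ≥0∞ := (j₂ : ℝ≥0∞) with hu₂
  set u₃ : ℝ≥0∞ := (j₃ : ℝ≥0∞) with hu₃
  have h₁n : u₁ ≠ 0 := by rw [hu₁]; exact_mod_cast (by omega : j₁ ≠ 0)
  have h₂n : u₂ ≠ 0 := by rw [hu₂]; exact_mod_cast (by omega : j₂ ≠ 0)
  have h₃n : u₃ ≠ 0 := by rw [hu₃]; exact_mod_cast (by omega : j₃ ≠ 0)
  have h₁t : u₁ ≠ ⊤ := by rw [hu₁]; exact ENNReal.natCast_ne_top j₁
  have h₂t : u₂ ≠ ⊤ := by rw [hu₂]; exact ENNReal.natCast_ne_top j₂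
  have h₃t : u₃ ≠ ⊤ := by rw [hu₃]; exact ENNReal.natCast_ne_top j₃
  set X : ℝ≥0∞ := (2 : ℝ≥0∞) ^ ((k₁ : ℝ)) * u₁ * u₂ * u₃⁻¹ with hX
  set Y : ℝ≥0∞ := (2 : ℝ≥0∞) ^ (-(k₁ : ℝ)) * u₁⁻¹ * u₂⁻¹ * u₃ with hY
  set B : ℝ≥0∞ := (2 : ℝ≥0∞) ^ (-(k₁ : ℝ) * δ₁) * u₁ ^ (-(1 + δ₁)) * u₂⁻¹ * u₃⁻¹ with hB
  -- numerator bound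
  have hnum : ((2 : ℝ≥0∞) ^ (-(k₂ : ℝ)) * u₂⁻¹ + (2 : ℝ≥0∞) ^ ((k₁ : ℝ) - (k₂ : ℝ)) * u₃⁻¹) ^ δ₂₃
      ≤ (2:ℝ≥0∞) ^ (((k₁:ℝ) - (k₂:ℝ)) * δ₂₃) * (u₂ ^ (-δ₂₃) + u₃ ^ (-δ₂₃)) := by
    have e1 : (2:ℝ≥0∞)^(-(k₂:ℝ)) ≤ (2:ℝ≥0∞)^((k₁:ℝ)-(k₂:ℝ)) := by
      apply ENNReal.rpow_le_rpow_of_exponent_le one_le_two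
      have : (0:ℝ) ≤ (k₁:ℝ) := Nat.cast_nonneg k₁
      linarith
    have hsum : (2 : ℝ≥0∞) ^ (-(k₂ : ℝ)) * u₂⁻¹ + (2 : ℝ≥0∞) ^ ((k₁ : ℝ) - (k₂ : ℝ)) * u₃⁻¹
        ≤ (2:ℝ≥0∞)^((k₁:ℝ)-(k₂:ℝ)) * (u₂⁻¹ + u₃⁻¹) := by
      rw [mul_add]
      gcongr
    calc ((2 : ℝ≥0∞) ^ (-(k₂ : ℝ)) * u₂⁻¹ + (2 : ℝ≥0∞) ^ ((k₁ : ℝ) - (k₂ : ℝ)) * u₃⁻¹) ^ δ₂₃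
        ≤ ((2:ℝ≥0∞)^((k₁:ℝ)-(k₂:ℝ)) * (u₂⁻¹ + u₃⁻¹)) ^ δ₂₃ :=
          ENNReal.rpow_le_rpow hsum hδ₂₃0.le
      _ = ((2:ℝ≥0∞)^((k₁:ℝ)-(k₂:ℝ))) ^ δ₂₃ * (u₂⁻¹ + u₃⁻¹) ^ δ₂₃ :=
          ENNReal.mul_rpow_of_nonneg _ _ hδ₂₃0.le
      _ ≤ (2:ℝ≥0∞) ^ (((k₁:ℝ)-(k₂:ℝ)) * δ₂₃) * ((u₂⁻¹) ^ δ₂₃ + (u₃⁻¹) ^ δ₂₃) := by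
          rw [rpow_rpow]
          exact mul_le_mul_right (ENNReal.rpow_add_le_add_rpow _ _ hδ₂₃0.le hδ₂₃1) _
      _ = (2:ℝ≥0∞) ^ (((k₁:ℝ)-(k₂:ℝ)) * δ₂₃) * (u₂ ^ (-δ₂₃) + u₃ ^ (-δ₂₃)) := by
          rw [ENNReal.inv_rpow, ENNReal.inv_rpow, ← ENNReal.rpow_neg, ← ENNReal.rpow_neg]
  have hYθ : Y ^ θ ≤ (X + Y) ^ θ := ENNReal.rpow_le_rpow le_add_self hθ.le
  have hXθ : X ^ θ ≤ (X + Y) ^ θ := ENNReal.rpow_le_rpow le_self_add hθ.le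
  -- expansion of inverse powers
  have hYexp : (Y ^ θ)⁻¹ = (2:ℝ≥0∞) ^ ((k₁:ℝ) * θ) * u₁ ^ θ * u₂ ^ θ * u₃ ^ (-θ) := by
    have hfin1 : (2:ℝ≥0∞)^(-(k₁:ℝ)) ≠ ⊤ := by simp [ENNReal.rpow_eq_top_iff]
    rw [← ENNReal.rpow_neg, hY,
      ENNReal.mul_rpow_of_ne_top (ENNReal.mul_ne_top (ENNReal.mul_ne_top hfin1
        (ENNReal.inv_ne_top.2 h₁n)) (ENNReal.inv_ne_top.2 h₂n)) h₃t,
      ENNReal.mul_rpow_of_ne_top (ENNReal.mul_ne_top hfin1 (ENNReal.inv_ne_top.2 h₁n))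
        (ENNReal.inv_ne_top.2 h₂n),
      ENNReal.mul_rpow_of_ne_top hfin1 (ENNReal.inv_ne_top.2 h₁n),
      ENNReal.inv_rpow, ENNReal.inv_rpow, ← ENNReal.rpow_neg, ← ENNReal.rpow_neg, neg_neg,
      rpow_rpow, show -(k₁:ℝ) * -θ = (k₁:ℝ) * θ by ring]
  have hXexp : (X ^ θ)⁻¹ = (2:ℝ≥0∞) ^ (-(k₁:ℝ) * θ) * u₁ ^ (-θ) * u₂ ^ (-θ) * u₃ ^ θ := by
    have hfin1 : (2:ℝ≥0∞)^((k₁:ℝ)) ≠ ⊤ := by simp [ENNReal.rpow_eq_top_iff]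
    rw [← ENNReal.rpow_neg, hX,
      ENNReal.mul_rpow_of_ne_top (ENNReal.mul_ne_top (ENNReal.mul_ne_top hfin1 h₁t) h₂t)
        (ENNReal.inv_ne_top.2 h₃n),
      ENNReal.mul_rpow_of_ne_top (ENNReal.mul_ne_top hfin1 h₁t) h₂t,
      ENNReal.mul_rpow_of_ne_top hfin1 h₁t,
      ENNReal.inv_rpow, ← ENNReal.rpow_neg, neg_neg,
      rpow_rpow, show (k₁:ℝ) * -θ = -(k₁:ℝ) * θ by ring]
  have hP1 : B * u₂ ^ (-δ₂₃) / Y ^ θ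
      = (2:ℝ≥0∞) ^ (-(k₁:ℝ) * (δ₁ - θ)) * u₁ ^ (-(1 + (δ₁ - θ))) *
          u₂ ^ (-(1 + (δ₂₃ - θ))) * u₃ ^ (-(1 + θ)) := by
    rw [div_eq_mul_inv, hYexp, hB,
      ← ENNReal.rpow_neg_one u₂, ← ENNReal.rpow_neg_one u₃,
      show -(k₁:ℝ) * (δ₁ - θ) = -(k₁:ℝ) * δ₁ + (k₁:ℝ) * θ by ring,
      ENNReal.rpow_add _ _ ha0 hat,
      show -(1 + (δ₁ - θ)) = -(1 + δ₁) + θ by ring,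
      ENNReal.rpow_add _ _ h₁n h₁t,
      show -(1 + (δ₂₃ - θ)) = (-1 : ℝ) + -δ₂₃ + θ by ring,
      ENNReal.rpow_add _ _ h₂n h₂t, ENNReal.rpow_add _ _ h₂n h₂t,
      show -(1 + θ) = (-1 : ℝ) + -θ by ring,
      ENNReal.rpow_add _ _ h₃n h₃t]
    ring
  have hP2 : B * u₃ ^ (-δ₂₃) / X ^ θ
      = (2:ℝ≥0∞) ^ (-(k₁:ℝ) * (δ₁ + θ)) * u₁ ^ (-(1 + (δ₁ + θ))) *
          u₂ ^ (-(1 + θ)) * u₃ ^ (-(1 + (δ₂₃ - θ))) := by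
    rw [div_eq_mul_inv, hXexp, hB,
      ← ENNReal.rpow_neg_one u₂, ← ENNReal.rpow_neg_one u₃,
      show -(k₁:ℝ) * (δ₁ + θ) = -(k₁:ℝ) * δ₁ + -(k₁:ℝ) * θ by ring,
      ENNReal.rpow_add _ _ ha0 hat,
      show -(1 + (δ₁ + θ)) = -(1 + δ₁) + -θ by ring,
      ENNReal.rpow_add _ _ h₁n h₁t,
      show -(1 + θ) = (-1 : ℝ) + -θ by ring,
      ENNReal.rpow_add _ _ h₂n h₂t,
      show -(1 + (δ₂₃ - θ)) = (-1 : ℝ) + -δ₂₃ + θ by ring,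
      ENNReal.rpow_add _ _ h₃n h₃t, ENNReal.rpow_add _ _ h₃n h₃t]
    ring
  calc B * ((2 : ℝ≥0∞) ^ (-(k₂ : ℝ)) * u₂⁻¹ + (2 : ℝ≥0∞) ^ ((k₁ : ℝ) - (k₂ : ℝ)) * u₃⁻¹) ^ δ₂₃ /
        (X + Y) ^ θ
      ≤ B * ((2:ℝ≥0∞) ^ (((k₁:ℝ) - (k₂:ℝ)) * δ₂₃) * (u₂ ^ (-δ₂₃) + u₃ ^ (-δ₂₃))) / (X + Y) ^ θ := by
        gcongr
    _ = (2:ℝ≥0∞) ^ (((k₁:ℝ) - (k₂:ℝ)) * δ₂₃) *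
          (B * u₂ ^ (-δ₂₃) / (X + Y) ^ θ + B * u₃ ^ (-δ₂₃) / (X + Y) ^ θ) := by
        rw [div_eq_mul_inv, div_eq_mul_inv, div_eq_mul_inv]
        ring
    _ ≤ (2:ℝ≥0∞) ^ (((k₁:ℝ) - (k₂:ℝ)) * δ₂₃) *
          (B * u₂ ^ (-δ₂₃) / Y ^ θ + B * u₃ ^ (-δ₂₃) / X ^ θ) := by
        gcongr
    _ = _ := by rw [hP1, hP2]

lemma pser_ne_top {ε : ℝ} (hε : 0 < ε) :
    (∑' j : ℕ, if 1 ≤ j then ((j:ℝ≥0∞)) ^ (-(1+ε)) else 0) ≠ ⊤ := by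
  obtain ⟨C, hCt, hC⟩ := tail_ennreal hε
  have h1 := hC 1 le_rfl
  have he : (∑' j : ℕ, if 1 ≤ j then ((j:ℝ≥0∞)) ^ (-(1+ε)) else 0)
      = ∑' j : ℕ, (if 1 ≤ j ∧ (1:ℝ) ≤ (j:ℝ) then ((j:ℝ≥0∞)) ^ (-(1+ε)) else 0) :=
    tsum_congr fun j => by
      by_cases h : 1 ≤ j
      · rw [if_pos h, if_pos ⟨h, by exact_mod_cast h⟩]
      · rw [if_neg h, if_neg (fun hh => h hh.1)]
  rw [he]
  have hfin : C * (ENNReal.ofReal 1) ^ (-ε) ≠ ⊤ := by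
    rw [ENNReal.ofReal_one, ENNReal.one_rpow, mul_one]; exact hCt
  exact ne_top_of_le_ne_top hfin h1


/-- The summability estimate 𝒥₂(A) ≲ A^{-δ₀}: condition j₂ ≥ A (Lemma 3.1, (JJA-2)):
sum over `k₂ ≥ k₁ ≥ 0` and `j₁, j₂, j₃ ≥ 1` of
`2^{-k₁δ₁} j₁^{-1-δ₁} j₂⁻¹ j₃⁻¹ (2^{-k₂}j₂⁻¹ + 2^{k₁-k₂}j₃⁻¹)^{δ₂₃} /
(2^{k₁} j₁ j₂ j₃⁻¹ + 2^{-k₁} j₁⁻¹ j₂⁻¹ j₃)^θ`. -/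
theorem stmt3 (δ₁ δ₂₃ θ : ℝ) (hδ₁ : δ₁ ∈ Set.Ioc (0:ℝ) 1) (hδ₂₃ : δ₂₃ ∈ Set.Ioc (0:ℝ) 1)
    (hθ : 0 < θ) (hθ' : θ < min δ₁ δ₂₃) :
    ∃ C : ℝ≥0∞, C ≠ ⊤ ∧ ∀ (A : ℝ), 1 ≤ A →
      (∑' k₁ : ℕ, ∑' k₂ : ℕ, ∑' j₁ : ℕ, ∑' j₂ : ℕ, ∑' j₃ : ℕ,
          if k₁ ≤ k₂ ∧ 1 ≤ j₁ ∧ 1 ≤ j₂ ∧ 1 ≤ j₃ ∧ A ≤ (j₂ : ℝ) then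
            (2 : ℝ≥0∞) ^ (-(k₁ : ℝ) * δ₁) * ((j₁ : ℝ≥0∞)) ^ (-(1 + δ₁)) *
              ((j₂ : ℝ≥0∞))⁻¹ * ((j₃ : ℝ≥0∞))⁻¹ *
              ((2 : ℝ≥0∞) ^ (-(k₂ : ℝ)) * ((j₂ : ℝ≥0∞))⁻¹ +
                  (2 : ℝ≥0∞) ^ ((k₁ : ℝ) - (k₂ : ℝ)) * ((j₃ : ℝ≥0∞))⁻¹) ^ δ₂₃ /
              ((2 : ℝ≥0∞) ^ ((k₁ : ℝ)) * (j₁ : ℝ≥0∞) * (j₂ : ℝ≥0∞) * ((j₃ : ℝ≥0∞))⁻¹ +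
                  (2 : ℝ≥0∞) ^ (-(k₁ : ℝ)) * ((j₁ : ℝ≥0∞))⁻¹ * ((j₂ : ℝ≥0∞))⁻¹ *
                    (j₃ : ℝ≥0∞)) ^ θ
          else 0)
        ≤ C * (ENNReal.ofReal A) ^ (-(min θ (min (δ₁ - θ) (δ₂₃ - θ)))) := by
  obtain ⟨hδ₁p, hδ₁1⟩ := hδ₁
  obtain ⟨hδ₂₃p, hδ₂₃1⟩ := hδ₂₃
  have hθδ₁ : θ < δ₁ := lt_of_lt_of_le hθ' (min_le_left _ _)
  have hθδ₂₃ : θ < δ₂₃ := lt_of_lt_of_le hθ' (min_le_right _ _)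
  have hσ₁ : (0:ℝ) < δ₂₃ - θ := by linarith
  have hε₁ : (0:ℝ) < δ₁ - θ := by linarith
  have hε₂ : (0:ℝ) < δ₁ + θ := by linarith
  obtain ⟨C₁, hC₁t, hC₁⟩ := tail_ennreal hσ₁
  obtain ⟨C₂, hC₂t, hC₂⟩ := tail_ennreal hθ
  set Sgeo : ℝ≥0∞ := ∑' m : ℕ, (2:ℝ≥0∞) ^ (-(m:ℝ) * δ₂₃) with hSgeo
  set Sf₁ : ℝ≥0∞ := ∑' k : ℕ, (2:ℝ≥0∞) ^ (-(k:ℝ) * (δ₁ - θ)) with hSf₁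
  set Sf₂ : ℝ≥0∞ := ∑' k : ℕ, (2:ℝ≥0∞) ^ (-(k:ℝ) * (δ₁ + θ)) with hSf₂
  set Mg₁ : ℝ≥0∞ := ∑' j : ℕ, (if 1 ≤ j then ((j:ℝ≥0∞)) ^ (-(1+(δ₁ - θ))) else 0) with hMg₁
  set Mg₂ : ℝ≥0∞ := ∑' j : ℕ, (if 1 ≤ j then ((j:ℝ≥0∞)) ^ (-(1+(δ₁ + θ))) else 0) with hMg₂
  set Mm₁ : ℝ≥0∞ := ∑' j : ℕ, (if 1 ≤ j then ((j:ℝ≥0∞)) ^ (-(1+θ)) else 0) with hMm₁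
  set Mm₂ : ℝ≥0∞ := ∑' j : ℕ, (if 1 ≤ j then ((j:ℝ≥0∞)) ^ (-(1+(δ₂₃ - θ))) else 0) with hMm₂
  have hSgeot : Sgeo ≠ ⊤ := geo_ne_top hδ₂₃p
  have hSf₁t : Sf₁ ≠ ⊤ := geo_ne_top hε₁
  have hSf₂t : Sf₂ ≠ ⊤ := geo_ne_top hε₂
  have hMg₁t : Mg₁ ≠ ⊤ := pser_ne_top hε₁
  have hMg₂t : Mg₂ ≠ ⊤ := pser_ne_top hε₂
  have hMm₁t : Mm₁ ≠ ⊤ := pser_ne_top hθ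
  have hMm₂t : Mm₂ ≠ ⊤ := pser_ne_top hσ₁
  refine ⟨Sf₁ * Sgeo * Mg₁ * C₁ * Mm₁ + Sf₂ * Sgeo * Mg₂ * C₂ * Mm₂, ?_, ?_⟩
  · exact ENNReal.add_ne_top.2
      ⟨ENNReal.mul_ne_top (ENNReal.mul_ne_top (ENNReal.mul_ne_top
          (ENNReal.mul_ne_top hSf₁t hSgeot) hMg₁t) hC₁t) hMm₁t,
        ENNReal.mul_ne_top (ENNReal.mul_ne_top (ENNReal.mul_ne_top
          (ENNReal.mul_ne_top hSf₂t hSgeot) hMg₂t) hC₂t) hMm₂t⟩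
  intro A hA
  set δ₀ : ℝ := min θ (min (δ₁ - θ) (δ₂₃ - θ)) with hδ₀
  set Z : ℝ≥0∞ := (ENNReal.ofReal A) ^ (-δ₀) with hZ
  have hoA : (1:ℝ≥0∞) ≤ ENNReal.ofReal A := by
    rw [show (1:ℝ≥0∞) = ENNReal.ofReal 1 from ENNReal.ofReal_one.symm]
    exact ENNReal.ofReal_le_ofReal hA
  have hZa : (ENNReal.ofReal A) ^ (-(δ₂₃ - θ)) ≤ Z := by
    apply ENNReal.rpow_le_rpow_of_exponent_le hoA
    have : δ₀ ≤ δ₂₃ - θ := le_trans (min_le_right _ _) (min_le_right _ _)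
    linarith
  have hZb : (ENNReal.ofReal A) ^ (-θ) ≤ Z := by
    apply ENNReal.rpow_le_rpow_of_exponent_le hoA
    have : δ₀ ≤ θ := min_le_left _ _
    linarith
  have hH₁ : (∑' j : ℕ, (if 1 ≤ j ∧ A ≤ (j:ℝ) then ((j:ℝ≥0∞)) ^ (-(1+(δ₂₃ - θ))) else 0))
      ≤ C₁ * Z := (hC₁ A hA).trans (mul_le_mul_right hZa _)
  have hH₂ : (∑' j : ℕ, (if 1 ≤ j ∧ A ≤ (j:ℝ) then ((j:ℝ≥0∞)) ^ (-(1+θ)) else 0))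
      ≤ C₂ * Z := (hC₂ A hA).trans (mul_le_mul_right hZb _)
  have hterm : ∀ (k₁ k₂ j₁ j₂ j₃ : ℕ),
      (if k₁ ≤ k₂ ∧ 1 ≤ j₁ ∧ 1 ≤ j₂ ∧ 1 ≤ j₃ ∧ A ≤ (j₂ : ℝ) then
            (2 : ℝ≥0∞) ^ (-(k₁ : ℝ) * δ₁) * ((j₁ : ℝ≥0∞)) ^ (-(1 + δ₁)) *
              ((j₂ : ℝ≥0∞))⁻¹ * ((j₃ : ℝ≥0∞))⁻¹ *
              ((2 : ℝ≥0∞) ^ (-(k₂ : ℝ)) * ((j₂ : ℝ≥0∞))⁻¹ +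
                  (2 : ℝ≥0∞) ^ ((k₁ : ℝ) - (k₂ : ℝ)) * ((j₃ : ℝ≥0∞))⁻¹) ^ δ₂₃ /
              ((2 : ℝ≥0∞) ^ ((k₁ : ℝ)) * (j₁ : ℝ≥0∞) * (j₂ : ℝ≥0∞) * ((j₃ : ℝ≥0∞))⁻¹ +
                  (2 : ℝ≥0∞) ^ (-(k₁ : ℝ)) * ((j₁ : ℝ≥0∞))⁻¹ * ((j₂ : ℝ≥0∞))⁻¹ *
                    (j₃ : ℝ≥0∞)) ^ θ
          else 0)
      ≤ (if k₁ ≤ k₂ then (2:ℝ≥0∞) ^ (((k₁:ℝ)-(k₂:ℝ))*δ₂₃) else 0) *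
        ((2:ℝ≥0∞) ^ (-(k₁:ℝ) * (δ₁ - θ)) * (if 1 ≤ j₁ then ((j₁:ℝ≥0∞)) ^ (-(1+(δ₁ - θ))) else 0) *
           (if 1 ≤ j₂ ∧ A ≤ (j₂:ℝ) then ((j₂:ℝ≥0∞)) ^ (-(1+(δ₂₃ - θ))) else 0) *
           (if 1 ≤ j₃ then ((j₃:ℝ≥0∞)) ^ (-(1+θ)) else 0)
         + (2:ℝ≥0∞) ^ (-(k₁:ℝ) * (δ₁ + θ)) * (if 1 ≤ j₁ then ((j₁:ℝ≥0∞)) ^ (-(1+(δ₁ + θ))) else 0) *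
           (if 1 ≤ j₂ ∧ A ≤ (j₂:ℝ) then ((j₂:ℝ≥0∞)) ^ (-(1+θ)) else 0) *
           (if 1 ≤ j₃ then ((j₃:ℝ≥0∞)) ^ (-(1+(δ₂₃ - θ))) else 0)) := by
    intro k₁ k₂ j₁ j₂ j₃
    by_cases hc : k₁ ≤ k₂ ∧ 1 ≤ j₁ ∧ 1 ≤ j₂ ∧ 1 ≤ j₃ ∧ A ≤ (j₂ : ℝ)
    · obtain ⟨hk, h1, h2, h3, hA2⟩ := hc
      rw [if_pos (⟨hk, h1, h2, h3, hA2⟩ : k₁ ≤ k₂ ∧ 1 ≤ j₁ ∧ 1 ≤ j₂ ∧ 1 ≤ j₃ ∧ A ≤ (j₂ : ℝ)),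
        if_pos hk, if_pos h1, if_pos (⟨h2, hA2⟩ : 1 ≤ j₂ ∧ A ≤ (j₂:ℝ)), if_pos h3,
        if_pos h1, if_pos (⟨h2, hA2⟩ : 1 ≤ j₂ ∧ A ≤ (j₂:ℝ)), if_pos h3]
      exact key_term δ₁ δ₂₃ θ hδ₁p hδ₂₃p hδ₂₃1 hθ k₁ k₂ j₁ j₂ j₃ h1 h2 h3
    · rw [if_neg hc]; exact zero_le
  have step1 := ENNReal.tsum_le_tsum fun k₁ => ENNReal.tsum_le_tsum fun k₂ =>
    ENNReal.tsum_le_tsum fun j₁ => ENNReal.tsum_le_tsum fun j₂ =>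
    ENNReal.tsum_le_tsum fun j₃ => hterm k₁ k₂ j₁ j₂ j₃
  refine step1.trans ?_
  have step2 := five_sum2
    (fun k₁ k₂ => if k₁ ≤ k₂ then (2:ℝ≥0∞) ^ (((k₁:ℝ)-(k₂:ℝ))*δ₂₃) else 0)
    (fun k => (2:ℝ≥0∞) ^ (-(k:ℝ) * (δ₁ - θ)))
    (fun j => if 1 ≤ j then ((j:ℝ≥0∞)) ^ (-(1+(δ₁ - θ))) else 0)
    (fun j => if 1 ≤ j ∧ A ≤ (j:ℝ) then ((j:ℝ≥0∞)) ^ (-(1+(δ₂₃ - θ))) else 0)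
    (fun j => if 1 ≤ j then ((j:ℝ≥0∞)) ^ (-(1+θ)) else 0)
    (fun k => (2:ℝ≥0∞) ^ (-(k:ℝ) * (δ₁ + θ)))
    (fun j => if 1 ≤ j then ((j:ℝ≥0∞)) ^ (-(1+(δ₁ + θ))) else 0)
    (fun j => if 1 ≤ j ∧ A ≤ (j:ℝ) then ((j:ℝ≥0∞)) ^ (-(1+θ)) else 0)
    (fun j => if 1 ≤ j then ((j:ℝ≥0∞)) ^ (-(1+(δ₂₃ - θ))) else 0)
    Sgeo (fun k₁ => geo_shift k₁)
  refine (le_of_eq step2).trans ?_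
  calc Sf₁ * Sgeo * Mg₁ * (∑' j : ℕ, (if 1 ≤ j ∧ A ≤ (j:ℝ) then ((j:ℝ≥0∞)) ^ (-(1+(δ₂₃ - θ))) else 0)) * Mm₁
        + Sf₂ * Sgeo * Mg₂ * (∑' j : ℕ, (if 1 ≤ j ∧ A ≤ (j:ℝ) then ((j:ℝ≥0∞)) ^ (-(1+θ)) else 0)) * Mm₂
      ≤ Sf₁ * Sgeo * Mg₁ * (C₁ * Z) * Mm₁ + Sf₂ * Sgeo * Mg₂ * (C₂ * Z) * Mm₂ := by
        gcongr
    _ = (Sf₁ * Sgeo * Mg₁ * C₁ * Mm₁ + Sf₂ * Sgeo * Mg₂ * C₂ * Mm₂) * Z := by ring
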